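/- Let 𝒵 be a nonempty convex set of nonnegative random variables Z with E[Z] = 1, let 𝒵^e = {Z ∈ 𝒵 : Z > 0 a.s.} and 𝒵_φ = {Z ∈ 𝒵 : E[φ(Z)] < ∞} where φ(x) = x ln x. If Ĵ° := inf_{Z ∈ 𝒵} E[φ(Z)] is attained at some Z° ∈ 𝒵_φ and 𝒵^e ∩ 𝒵_φ ≠ ∅, then Z° > 0 a.s. (i.e. Z° ∈ 𝒵^e) and Ĵ° = inf_{Z ∈ 𝒵^e} E[φ(Z)]. -/

import Mathlib

open Real MeasureTheory

/-- `φ(x) = x ln x` for `x > 0`, `φ(0) = 0`. -/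
noncomputable def phi (x : ℝ) : ℝ := x * Real.log x

lemma phi_lower {x : ℝ} (hx : 0 ≤ x) : -Real.exp (-1) ≤ phi x := by
  rcases eq_or_lt_of_le hx with h | h
  · rw [phi, ← h]
    nlinarith [Real.exp_pos (-1)]
  · rw [phi]
    rcases le_or_gt 0 (Real.log x) with hy0 | hy0
    · nlinarith [mul_nonneg h.le hy0, Real.exp_pos (-1)]
    · have h1 : (-1 - Real.log x) + 1 ≤ Real.exp (-1 - Real.log x) :=
        Real.add_one_le_exp _
      have h2 : Real.exp (-1 - Real.log x) * Real.exp (Real.log x) = Real.exp (-1) := by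
        rw [← Real.exp_add]; ring_nf
      have h3 : Real.exp (Real.log x) = x := Real.exp_log h
      rw [h3] at h2
      nlinarith [mul_le_mul_of_nonneg_right h1 h.le]

/-- If the infimum of `E[φ(Z)]` over a convex set `𝒵` of densities is attained at
`Z° ∈ 𝒵_φ` and `𝒵^e ∩ 𝒵_φ ≠ ∅`, then `Z° > 0` a.s. (`Z° ∈ 𝒵^e`), and hence the
infimum over `𝒵` coincides with the infimum over `𝒵^e` and is attained at `Z°`. -/
theorem minimizer_equivalent
    {Ω : Type*} [MeasurableSpace Ω] (μ : Measure Ω) [IsProbabilityMeasure μ]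
    (Zs : Set (Ω → ℝ)) (hconv : Convex ℝ Zs) (hne : Zs.Nonempty)
    (hdens : ∀ Z ∈ Zs, (∀ᵐ ω ∂μ, 0 ≤ Z ω) ∧ Integrable Z μ ∧ ∫ ω, Z ω ∂μ = 1)
    (Zo : Ω → ℝ) (hZo : Zo ∈ Zs)
    (hZophi : Integrable (fun ω => phi (Zo ω)) μ)
    (hmin : ∀ Z ∈ Zs, Integrable (fun ω => phi (Z ω)) μ →
      ∫ ω, phi (Zo ω) ∂μ ≤ ∫ ω, phi (Z ω) ∂μ)
    (hZe : ∃ Z ∈ Zs, (∀ᵐ ω ∂μ, 0 < Z ω) ∧ Integrable (fun ω => phi (Z ω)) μ) :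
    (∀ᵐ ω ∂μ, 0 < Zo ω) ∧
    (∀ Z ∈ Zs, (∀ᵐ ω ∂μ, 0 < Z ω) → Integrable (fun ω => phi (Z ω)) μ →
      ∫ ω, phi (Zo ω) ∂μ ≤ ∫ ω, phi (Z ω) ∂μ) := by
  obtain ⟨Z, hZmem, hZpos, hZphi⟩ := hZe
  obtain ⟨hZonn, hZoint, -⟩ := hdens Zo hZo
  obtain ⟨-, hZint, -⟩ := hdens Z hZmem
  have key : ∀ᵐ ω ∂μ, 0 < Zo ω := by
    by_contra hcon
    -- measurable version of Zo
    obtain ⟨g, hgmeas, hg⟩ := hZoint.aestronglyMeasurable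
    set B : Set Ω := g ⁻¹' {0} with hBdef
    have hB : MeasurableSet B := hgmeas.measurable (measurableSet_singleton 0)
    have hBpos : 0 < μ B := by
      rcases eq_zero_or_pos (μ B) with h0 | h0
      · exfalso
        apply hcon
        have hne0 : ∀ᵐ ω ∂μ, g ω ≠ 0 := by
          rw [ae_iff]
          simpa [hBdef, Set.preimage] using h0
        filter_upwards [hg, hZonn, hne0] with ω h1 h2 h3
        exact h2.lt_of_ne fun he => h3 (by rw [← h1, ← he])
      · exact h0
    set F0 := ∫ ω, phi (Zo ω) ∂μ with hF0
    set J := ∫ ω, phi (Z ω) ∂μ with hJ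
    have hFJ : F0 ≤ J := hmin Z hZmem hZphi
    set c := ∫ ω in B, Z ω ∂μ with hc
    have hcpos : 0 < c := by
      rw [hc, setIntegral_pos_iff_support_of_nonneg_ae
        (ae_restrict_of_ae (hZpos.mono fun ω h => h.le)) hZint.integrableOn]
      have hsub : (B : Set Ω) ≤ᵐ[μ] ((Function.support Z ∩ B : Set Ω)) := by
        filter_upwards [hZpos] with ω h
        exact fun hω => ⟨ne_of_gt h, hω⟩
      exact lt_of_lt_of_le hBpos (measure_mono_ae hsub)
    set t := Real.exp ((F0 - J) / c - 1) with ht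
    have ht0 : 0 < t := Real.exp_pos _
    have ht1 : t < 1 := by
      rw [ht, Real.exp_lt_one_iff]
      have : (F0 - J) / c ≤ 0 := div_nonpos_of_nonpos_of_nonneg (by linarith) hcpos.le
      linarith
    have hlogt : Real.log t = (F0 - J) / c - 1 := by rw [ht, Real.log_exp]
    have h1t : (0:ℝ) ≤ 1 - t := by linarith
    set W : Ω → ℝ := fun ω => (1 - t) * Zo ω + t * Z ω with hWdef
    have hW : W ∈ Zs := by
      have h := hconv hZo hZmem h1t ht0.le (by ring)
      convert h using 1
      ext ω
      simp [hWdef]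
    -- pointwise convexity bound
    have hconv_pt : ∀ᵐ ω ∂μ, phi (W ω) ≤ (1 - t) * phi (Zo ω) + t * phi (Z ω) := by
      filter_upwards [hZonn, hZpos] with ω h1 h2
      have := Real.convexOn_mul_log.2 (Set.mem_Ici.2 h1) (Set.mem_Ici.2 h2.le)
        h1t ht0.le (by ring)
      simpa [phi, smul_eq_mul, hWdef] using this
    have hWnn : ∀ᵐ ω ∂μ, 0 ≤ W ω := by
      filter_upwards [hZonn, hZpos] with ω h1 h2
      have : 0 ≤ (1 - t) * Zo ω := mul_nonneg h1t h1
      have : 0 ≤ t * Z ω := mul_nonneg ht0.le h2.le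
      simp only [hWdef]
      linarith
    have hWint : Integrable W μ := (hZoint.const_mul (1 - t)).add (hZint.const_mul t)
    set U : Ω → ℝ := fun ω => (1 - t) * phi (Zo ω) + t * phi (Z ω) with hUdef
    have hconv_pt' : ∀ᵐ ω ∂μ, phi (W ω) ≤ U ω := hconv_pt
    have hUint : Integrable U μ := (hZophi.const_mul (1 - t)).add (hZphi.const_mul t)
    have hWphi : Integrable (fun ω => phi (W ω)) μ := by
      refine Integrable.mono' (hUint.abs.add (integrable_const (Real.exp (-1))))
        (Real.continuous_mul_log.comp_aestronglyMeasurable hWint.aestronglyMeasurable) ?_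
      filter_upwards [hconv_pt', hWnn] with ω h1 h2
      have hl := phi_lower h2
      have h3 := le_abs_self (U ω)
      have h4 := abs_nonneg (U ω)
      have h5 := (Real.exp_pos (-1)).le
      simp only [Pi.add_apply]
      rw [Real.norm_eq_abs, abs_le]
      exact ⟨by linarith, by linarith⟩
    -- on B, a.e. `Zo = 0`
    have hZoB : ∀ᵐ ω ∂μ.restrict B, Zo ω = 0 := by
      filter_upwards [ae_restrict_of_ae hg, ae_restrict_mem hB] with ω h1 h2
      rw [h1]; exact h2
    -- value of phi ∘ W on B
    have haeB : ∀ᵐ ω ∂μ.restrict B, phi (W ω) = t * Real.log t * Z ω + t * phi (Z ω) := by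
      filter_upwards [hZoB, ae_restrict_of_ae hZpos] with ω h1 h2
      simp only [hWdef, h1, mul_zero, zero_add]
      rw [phi, phi, Real.log_mul (ne_of_gt ht0) (ne_of_gt h2)]
      ring
    have hIB : ∫ ω in B, phi (W ω) ∂μ
        = t * Real.log t * c + t * ∫ ω in B, phi (Z ω) ∂μ := by
      rw [integral_congr_ae haeB, integral_add
        ((hZint.integrableOn).const_mul _) ((hZphi.integrableOn).const_mul _),
        integral_const_mul, integral_const_mul]
    -- phi ∘ Zo vanishes on B
    have hIB0 : ∫ ω in B, phi (Zo ω) ∂μ = 0 := by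
      rw [integral_congr_ae (G := ℝ) (f := fun ω => phi (Zo ω)) (g := fun _ => 0)
        (by filter_upwards [hZoB] with ω h1; simp [phi, h1])]
      simp
    have hF0c : ∫ ω in Bᶜ, phi (Zo ω) ∂μ = F0 := by
      have := integral_add_compl hB hZophi
      rw [hIB0, zero_add] at this
      exact this
    -- bound on Bᶜ
    have hIBc : ∫ ω in Bᶜ, phi (W ω) ∂μ
        ≤ (1 - t) * F0 + t * ∫ ω in Bᶜ, phi (Z ω) ∂μ := by
      have h1 : ∫ ω in Bᶜ, phi (W ω) ∂μ ≤ ∫ ω in Bᶜ, U ω ∂μ :=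
        integral_mono_ae hWphi.integrableOn hUint.integrableOn
          (ae_restrict_of_ae hconv_pt')
      have h2 : ∫ ω in Bᶜ, U ω ∂μ
          = (1 - t) * ∫ ω in Bᶜ, phi (Zo ω) ∂μ + t * ∫ ω in Bᶜ, phi (Z ω) ∂μ := by
        rw [hUdef, integral_add ((hZophi.integrableOn).const_mul _)
          ((hZphi.integrableOn).const_mul _), integral_const_mul, integral_const_mul]
      rw [h2, hF0c] at h1
      exact h1
    have hJsplit : (∫ ω in B, phi (Z ω) ∂μ) + ∫ ω in Bᶜ, phi (Z ω) ∂μ = J :=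
      integral_add_compl hB hZphi
    -- the key chain
    have hchain : F0 ≤ ∫ ω, phi (W ω) ∂μ := hmin W hW hWphi
    have hsplitW : ∫ ω, phi (W ω) ∂μ
        = (∫ ω in B, phi (W ω) ∂μ) + ∫ ω in Bᶜ, phi (W ω) ∂μ :=
      (integral_add_compl hB hWphi).symm
    have hfinal : F0 ≤ t * Real.log t * c + t * J + (1 - t) * F0 := by
      rw [hsplitW, hIB] at hchain
      nlinarith [hIBc, hJsplit]
    -- divide by t and use the choice of t
    have hdiv : F0 ≤ Real.log t * c + J := by
      have h1 : t * F0 ≤ t * (Real.log t * c + J) := by nlinarith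
      exact le_of_mul_le_mul_left (by linarith [h1]) ht0
    rw [hlogt] at hdiv
    have : ((F0 - J) / c - 1) * c = F0 - J - c := by
      field_simp
    linarith [hdiv, this.ge, hcpos]
  refine ⟨key, fun Z hZ _ hint => hmin Z hZ hint⟩
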